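/- arXiv:math/0211012 — 2 statements merged into one kernel-verified Lean document; each statement's English description precedes it below -/
import Mathlib

section
/- Let a be a monic real Hurwitz polynomial of degree n ≥ 3 with coefficients a₁,…,a_n. Fix k ∈ {1,…,n−2}, and define c_l = Σ_j (−1)^{l+j} a_j x_{2l−j−1} as linear functions of (x₁,…,x_{n−1}) (with a₀ = x₀ = 1, out-of-range indices giving 0). Then every point (x₁,…,x_{n−1}) satisfying c_{k+1}² − 4 c_k c_{k+2} < 0 and c_l = 0 for all l ∉ {k, k+1, k+2} has all coordinates x_i nonnegative, i = 1,…,n−1. -/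
open Polynomial

/-- A real polynomial is Hurwitz stable if all of its complex roots have
negative real part. -/
def Hurwitz (p : Polynomial ℝ) : Prop :=
  ∀ z : ℂ, (p.map (algebraMap ℝ ℂ)).IsRoot z → z.re < 0

/-- Evaluation of a real polynomial at the purely imaginary number `i ω`. -/
noncomputable def evalI (p : Polynomial ℝ) (ω : ℝ) : ℂ :=
  Polynomial.aeval ((ω : ℂ) * Complex.I) p

/-- `c / q` is strictly positive real. -/
def SPR (c q : Polynomial ℝ) : Prop :=
  c.degree = q.degree ∧ Hurwitz q ∧ ∀ ω : ℝ, 0 < (evalI c ω / evalI q ω).re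

lemma lemA : ∀ N : ℕ, ∀ p : ℝ[X], p.Monic → p.natDegree = N →
    (∀ z : ℂ, Polynomial.aeval z p = 0 → z.re ≤ 0) → ∀ m, 0 ≤ p.coeff m := by
  intro N
  induction N using Nat.strong_induction_on with
  | _ N ih =>
    intro p hM hd hroots m
    rcases Nat.eq_zero_or_pos N with hN | hN
    · subst hN
      have h1 : p = 1 := hM.natDegree_eq_zero.mp hd
      subst h1
      rw [Polynomial.coeff_one]
      positivity
    · have hdeg : 0 < (p.map (algebraMap ℝ ℂ)).degree := by
        have hnd : (p.map (algebraMap ℝ ℂ)).natDegree = N := by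
          rw [hM.natDegree_map]; exact hd
        exact Polynomial.natDegree_pos_iff_degree_pos.mp (by omega)
      obtain ⟨z, hz⟩ := Complex.exists_root hdeg
      have hroot : Polynomial.aeval z p = 0 := by
        rw [Polynomial.aeval_def, ← Polynomial.eval_map]; exact hz
      rcases eq_or_ne z.im 0 with him | him
      · -- real root
        set r := z.re with hr
        have hzr : z = (r : ℂ) := Complex.ext rfl him
        have hev : p.eval r = 0 := by
          have h1 := Polynomial.aeval_ofReal (K := ℂ) p r
          rw [hzr] at hroot
          exact Complex.ofReal_eq_zero.mp (h1.symm.trans hroot)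
        obtain ⟨q, hq⟩ := Polynomial.dvd_iff_isRoot.mpr hev
        have hqM : q.Monic := (monic_X_sub_C r).of_mul_monic_left (hq ▸ hM)
        have hqd : q.natDegree = N - 1 := by
          have := Polynomial.natDegree_mul (Polynomial.X_sub_C_ne_zero r) hqM.ne_zero
          rw [← hq, hd, Polynomial.natDegree_X_sub_C] at this
          omega
        have hqroots : ∀ w : ℂ, Polynomial.aeval w q = 0 → w.re ≤ 0 := by
          intro w hw
          apply hroots
          rw [hq, map_mul, hw, mul_zero]
        have hqc := ih (N - 1) (by omega) q hqM hqd hqroots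
        have hrle : r ≤ 0 := hroots z hroot
        rw [hq]
        have hexp : (X - C r) * q = X * q - C r * q := by ring
        rw [hexp]
        rcases m with _ | m
        · rw [Polynomial.coeff_sub, Polynomial.coeff_C_mul, Polynomial.mul_coeff_zero]
          simp only [Polynomial.coeff_X_zero, zero_mul, zero_sub]
          nlinarith [hqc 0]
        · rw [Polynomial.coeff_sub, Polynomial.coeff_X_mul, Polynomial.coeff_C_mul]
          nlinarith [hqc m, hqc (m + 1)]
      · -- complex root
        have hdvd := p.quadratic_dvd_of_aeval_eq_zero_im_ne_zero hroot him
        obtain ⟨q, hq⟩ := hdvd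
        set Q : ℝ[X] := X ^ 2 - C (2 * z.re) * X + C (‖z‖ ^ 2) with hQ
        have hQeq : Q = X ^ (1 + 1) + (C (‖z‖ ^ 2) - C (2 * z.re) * X) := by rw [hQ]; ring
        have hQlow : (C (‖z‖ ^ 2) - C (2 * z.re) * X).degree ≤ 1 := by
          refine le_trans (Polynomial.degree_sub_le _ _) ?_
          apply max_le
          · exact le_trans (Polynomial.degree_C_le) (by norm_num)
          · refine le_trans (Polynomial.degree_mul_le _ _) ?_
            calc (C (2*z.re)).degree + X.degree ≤ 0 + 1 := by
                  exact add_le_add Polynomial.degree_C_le Polynomial.degree_X_le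
              _ = 1 := by norm_num
        have hQM : Q.Monic := by
          rw [hQeq]; exact Polynomial.monic_X_pow_add (lt_of_le_of_lt hQlow (by norm_num))
        have hQd : Q.natDegree = 2 := by
          apply Polynomial.natDegree_eq_of_degree_eq_some
          rw [hQeq]
          rw [Polynomial.degree_add_eq_left_of_degree_lt]
          · simp
          · rw [Polynomial.degree_X_pow]
            exact lt_of_le_of_lt hQlow (by norm_num)
        have hqM : q.Monic := hQM.of_mul_monic_left (hq ▸ hM)
        have hqd : q.natDegree = N - 2 := by
          have := Polynomial.natDegree_mul (hQM.ne_zero) hqM.ne_zero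
          rw [← hq, hd, hQd] at this
          have hN2 : 2 ≤ N := by
            by_contra hc
            interval_cases N <;> omega
          omega
        have hN2 : 2 ≤ N := by
          have := Polynomial.natDegree_mul (hQM.ne_zero) hqM.ne_zero
          rw [← hq, hd, hQd] at this
          omega
        have hqroots : ∀ w : ℂ, Polynomial.aeval w q = 0 → w.re ≤ 0 := by
          intro w hw
          apply hroots
          rw [hq, map_mul, hw, mul_zero]
        have hqc := ih (N - 2) (by omega) q hqM hqd hqroots
        have hrle : z.re ≤ 0 := hroots z hroot
        have hco : ∀ m', p.coeff m' = (X^2*q).coeff m' - 2*z.re * (X*q).coeff m'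
            + ‖z‖^2 * q.coeff m' := by
          intro m'
          rw [hq]
          have hexp : Q * q = X^2*q - C (2*z.re) * (X*q) + C (‖z‖^2) * q := by rw [hQ]; ring
          rw [hexp, Polynomial.coeff_add, Polynomial.coeff_sub, Polynomial.coeff_C_mul,
            Polynomial.coeff_C_mul]
        have hx2 : X^2 * q = X * (X * q) := by ring
        rcases m with _ | m
        · rw [hco 0, hx2]
          simp only [Polynomial.mul_coeff_zero, Polynomial.coeff_X_zero, zero_mul, mul_zero,
            sub_zero, zero_sub, zero_add]
          nlinarith [hqc 0]
        · rcases m with _ | m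
          · rw [hco 1, hx2]
            rw [Polynomial.coeff_X_mul, Polynomial.coeff_X_mul]
            simp only [Polynomial.mul_coeff_zero, Polynomial.coeff_X_zero, zero_mul]
            nlinarith [hqc 0, hqc 1]
          · rw [hco (m+2), hx2]
            rw [Polynomial.coeff_X_mul, Polynomial.coeff_X_mul, Polynomial.coeff_X_mul]
            nlinarith [hqc m, hqc (m+1), hqc (m+2)]
open Polynomial


lemma lemN1 (q : ℂ[X]) (d : ℕ) (hd : q.natDegree ≤ d) (z : ℂ) (hz : 1 ≤ ‖z‖) :
    ‖q.eval z‖ ≤ (∑ i ∈ Finset.range (d + 1), ‖q.coeff i‖) * ‖z‖ ^ d := by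
  rw [Polynomial.eval_eq_sum_range' (Nat.lt_succ_of_le hd)]
  refine le_trans (norm_sum_le _ _) ?_
  rw [Finset.sum_mul]
  refine Finset.sum_le_sum fun i hi => ?_
  rw [norm_mul, norm_pow]
  exact mul_le_mul_of_nonneg_left
    (pow_le_pow_right₀ hz (Nat.lt_succ_iff.mp (Finset.mem_range.mp hi)))
    (norm_nonneg _)

lemma lemN2 (A : ℂ[X]) (hA : A.Monic) (hd : 0 < A.natDegree) :
    ∃ R : ℝ, 1 ≤ R ∧ ∀ z : ℂ, R ≤ ‖z‖ → ‖z‖ ^ A.natDegree / 2 ≤ ‖A.eval z‖ := by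
  obtain ⟨d, hdd⟩ : ∃ d, A.natDegree = d := ⟨_, rfl⟩
  rw [hdd] at hd ⊢
  obtain ⟨CE, hCE⟩ : ∃ c, (∑ i ∈ Finset.range ((d - 1) + 1), ‖A.eraseLead.coeff i‖) = c := ⟨_, rfl⟩
  have hCE0 : 0 ≤ CE := hCE ▸ Finset.sum_nonneg fun i _ => norm_nonneg _
  refine ⟨max 1 (2 * CE), le_max_left _ _, fun z hz => ?_⟩
  have hz1 : 1 ≤ ‖z‖ := le_trans (le_max_left _ _) hz
  have hzCE : 2 * CE ≤ ‖z‖ := le_trans (le_max_right _ _) hz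
  have hEd : A.eraseLead.natDegree ≤ d - 1 := hdd ▸ A.eraseLead_natDegree_le
  have hEb : ‖A.eraseLead.eval z‖ ≤ CE * ‖z‖ ^ (d - 1) := by
    have := lemN1 A.eraseLead (d - 1) hEd z hz1
    rwa [hCE] at this
  have hAeval : A.eval z = A.eraseLead.eval z + z ^ d := by
    conv_lhs => rw [← A.eraseLead_add_C_mul_X_pow]
    rw [hA.leadingCoeff, Polynomial.eval_add, map_one, one_mul, Polynomial.eval_pow,
      Polynomial.eval_X, hdd]
  have h1 : ‖z‖ ^ d - ‖A.eraseLead.eval z‖ ≤ ‖A.eval z‖ := by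
    rw [hAeval]
    have h2 : ‖(A.eraseLead.eval z + z ^ d) - A.eraseLead.eval z‖
        ≤ ‖A.eraseLead.eval z + z ^ d‖ + ‖A.eraseLead.eval z‖ := norm_sub_le _ _
    simp only [add_sub_cancel_left] at h2
    rw [norm_pow] at h2
    linarith
  have hsplit : ‖z‖ ^ d = ‖z‖ * ‖z‖ ^ (d - 1) := by
    rw [← pow_succ']
    congr 1
    omega
  have hfin : CE * ‖z‖ ^ (d - 1) ≤ ‖z‖ ^ d / 2 := by
    rw [hsplit]
    have hp : (0:ℝ) ≤ ‖z‖ ^ (d - 1) := by positivity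
    nlinarith
  linarith

lemma lemSmall (A P : ℂ[X]) (hA : A.Monic) (hd : 0 < A.natDegree)
    (hP : P.natDegree < A.natDegree) (ε : ℝ) (hε : 0 < ε) :
    ∃ R : ℝ, 1 ≤ R ∧ ∀ z : ℂ, R ≤ ‖z‖ → ‖P.eval z / A.eval z‖ ≤ ε := by
  obtain ⟨R₁, hR₁, hlow⟩ := lemN2 A hA hd
  obtain ⟨d, hdd⟩ : ∃ d, A.natDegree = d := ⟨_, rfl⟩
  rw [hdd] at hd hP hlow
  obtain ⟨CP, hCP⟩ : ∃ c, (∑ i ∈ Finset.range ((d - 1) + 1), ‖P.coeff i‖) = c := ⟨_, rfl⟩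
  have hCP0 : 0 ≤ CP := hCP ▸ Finset.sum_nonneg fun i _ => norm_nonneg _
  refine ⟨max R₁ ((2 * CP + 1) / ε), le_trans hR₁ (le_max_left _ _), fun z hz => ?_⟩
  have hzR₁ : R₁ ≤ ‖z‖ := le_trans (le_max_left _ _) hz
  have hz1 : 1 ≤ ‖z‖ := le_trans hR₁ hzR₁
  have hz0 : (0:ℝ) < ‖z‖ := lt_of_lt_of_le one_pos hz1
  have hzε : (2 * CP + 1) / ε ≤ ‖z‖ := le_trans (le_max_right _ _) hz
  have hup : ‖P.eval z‖ ≤ CP * ‖z‖ ^ (d - 1) := by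
    have := lemN1 P (d - 1) (by omega) z hz1
    rwa [hCP] at this
  have hlo : ‖z‖ ^ d / 2 ≤ ‖A.eval z‖ := hlow z hzR₁
  have hlo0 : (0:ℝ) < ‖z‖ ^ d / 2 := by positivity
  rw [norm_div]
  have h2 : ‖P.eval z‖ / ‖A.eval z‖ ≤ (CP * ‖z‖ ^ (d - 1)) / (‖z‖ ^ d / 2) :=
    div_le_div₀ (by positivity) hup hlo0 hlo
  refine le_trans h2 ?_
  have hsplit : ‖z‖ ^ d = ‖z‖ * ‖z‖ ^ (d - 1) := by
    rw [← pow_succ']; congr 1; omega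
  rw [hsplit]
  rw [div_le_iff₀ (by positivity)]
  have hεz : 2 * CP + 1 ≤ ε * ‖z‖ := by
    rw [div_le_iff₀ hε] at hzε
    nlinarith
  have hp : (0:ℝ) < ‖z‖ ^ (d - 1) := by positivity
  nlinarith

lemma lemB (a p : ℝ[X]) (ha : a.Monic) (han : 0 < a.natDegree) (haH : Hurwitz a)
    (hdeg : p.natDegree < a.natDegree) (hp : p ≠ 0)
    (hpos : ∀ ω : ℝ, 0 ≤ (Polynomial.aeval ((ω:ℂ) * Complex.I) p *
        (starRingEnd ℂ) (Polynomial.aeval ((ω:ℂ) * Complex.I) a)).re) :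
    ∀ z : ℂ, Polynomial.aeval z p = 0 → z.re ≤ 0 := by
  set A : ℂ[X] := a.map (algebraMap ℝ ℂ) with hA
  set P : ℂ[X] := p.map (algebraMap ℝ ℂ) with hP
  have haev : ∀ (q : ℝ[X]) (w : ℂ),
      Polynomial.aeval w q = (q.map (algebraMap ℝ ℂ)).eval w := by
    intro q w
    rw [Polynomial.aeval_def, Polynomial.eval_map]
  have hAM : A.Monic := ha.map _
  have hAd : A.natDegree = a.natDegree := ha.natDegree_map _
  have hPd : P.natDegree < A.natDegree := by
    rw [hAd]
    exact lt_of_le_of_lt Polynomial.natDegree_map_le hdeg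
  have hAdpos : 0 < A.natDegree := hAd ▸ han
  have hA0 : ∀ z : ℂ, 0 ≤ z.re → A.eval z ≠ 0 := by
    intro z hz h
    exact absurd (haH z h) (not_lt.mpr hz)
  set F : ℂ → ℂ := fun z => P.eval z / A.eval z with hF
  have hFdiff : ∀ z : ℂ, A.eval z ≠ 0 → DifferentiableAt ℂ F z := by
    intro z hz
    exact (P.differentiable.differentiableAt).div (A.differentiable.differentiableAt) hz
  -- Claim 1 : Re F ≥ 0 on the open right half plane
  have claim1 : ∀ z : ℂ, 0 < z.re → 0 ≤ (F z).re := by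
    intro z₀ hz₀
    have key : ∀ ε : ℝ, 0 < ε → -(F z₀).re ≤ 0 + ε := by
      intro ε hε
      obtain ⟨R₀, hR₀1, hRsmall⟩ := lemSmall A P hAM hAdpos hPd ε hε
      set R : ℝ := max R₀ (‖z₀‖ + 1) with hR
      have hRpos : (0:ℝ) < R := lt_of_lt_of_le one_pos (le_trans hR₀1 (le_max_left _ _))
      set U : Set ℂ := Metric.ball (0:ℂ) R ∩ {z | 0 < z.re} with hU
      have hUo : IsOpen U := Metric.isOpen_ball.inter (isOpen_lt continuous_const Complex.continuous_re)
      have hUb : Bornology.IsBounded U := Metric.isBounded_ball.subset Set.inter_subset_left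
      have hclos : closure U ⊆ Metric.closedBall 0 R ∩ {z | 0 ≤ z.re} := by
        apply Set.subset_inter
        · exact (closure_mono Set.inter_subset_left).trans Metric.closure_ball_subset_closedBall
        · refine closure_minimal ?_ (isClosed_le continuous_const Complex.continuous_re)
          intro w hw
          show (0:ℝ) ≤ w.re
          exact le_of_lt (show (0:ℝ) < w.re from hw.2)
      have hAne : ∀ z ∈ closure U, A.eval z ≠ 0 := fun z hz => hA0 z (hclos hz).2
      set g : ℂ → ℂ := fun z => Complex.exp (-F z) with hg
      have hgd : ∀ z : ℂ, A.eval z ≠ 0 → DifferentiableAt ℂ g z := by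
        intro z hz
        exact ((hFdiff z hz).neg).cexp
      have hdcl : DiffContOnCl ℂ g U := by
        constructor
        · exact fun z hz => (hgd z (hAne z (subset_closure hz))).differentiableWithinAt
        · exact fun z hz => (hgd z (hAne z hz)).continuousAt.continuousWithinAt
      have hfr : ∀ w ∈ frontier U, ‖g w‖ ≤ Real.exp ε := by
        intro w hw
        have hwcl : w ∈ closure U := frontier_subset_closure hw
        have hwnorm : ‖w‖ ≤ R := by
          have := (hclos hwcl).1
          rwa [Metric.mem_closedBall, dist_zero_right] at this
        have hwre : 0 ≤ w.re := (hclos hwcl).2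
        have hwnotU : w ∉ U := by
          rw [hUo.frontier_eq] at hw
          exact hw.2
        have hgw : ‖g w‖ = Real.exp (-(F w).re) := by
          rw [hg]
          simp only [Complex.norm_exp, Complex.neg_re]
        rw [hgw, Real.exp_le_exp]
        rcases eq_or_lt_of_le hwre with hwre0 | hwre0
        · -- on the imaginary axis
          have hax : w = (w.im : ℂ) * Complex.I := by
            apply Complex.ext <;> simp [← hwre0]
          have hpw := hpos w.im
          rw [haev p, haev a, ← hax, ← hP, ← hA] at hpw
          have hAw : A.eval w ≠ 0 := hA0 w hwre
          have hre : 0 ≤ (F w).re := by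
            rw [hF]
            have hrw : (P.eval w / A.eval w).re
                = ((P.eval w) * (starRingEnd ℂ) (A.eval w)).re / Complex.normSq (A.eval w) := by
              rw [Complex.div_re, Complex.mul_re, Complex.conj_re, Complex.conj_im]
              ring
            rw [hrw]
            exact div_nonneg hpw (Complex.normSq_nonneg _)
          linarith
        · -- on the arc
          have hwR : R ≤ ‖w‖ := by
            by_contra hc
            push_neg at hc
            exact hwnotU ⟨Metric.mem_ball.mpr (by rwa [dist_zero_right]), hwre0⟩
          have hFw : ‖F w‖ ≤ ε := hRsmall w (le_trans (le_max_left _ _) hwR)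
          have := Complex.abs_re_le_norm (F w)
          have h2 : |(F w).re| ≤ ε := le_trans this hFw
          rw [abs_le] at h2
          linarith [h2.1]
      have hz₀U : z₀ ∈ U := by
        constructor
        · rw [Metric.mem_ball, dist_zero_right]
          exact lt_of_lt_of_le (lt_add_one _) (le_max_right _ _)
        · exact hz₀
      have hgz₀ := Complex.norm_le_of_forall_mem_frontier_norm_le hUb hdcl hfr
        (subset_closure hz₀U)
      have hgz : ‖g z₀‖ = Real.exp (-(F z₀).re) := by
        rw [hg]
        simp only [Complex.norm_exp, Complex.neg_re]
      rw [hgz, Real.exp_le_exp] at hgz₀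
      linarith
    have := le_of_forall_pos_le_add key
    linarith
  -- Claim 2 : roots of p lie in the closed left half plane
  intro z hroot
  by_contra hc
  push_neg at hc
  have hAz : A.eval z ≠ 0 := hA0 z (le_of_lt hc)
  have hPz : P.eval z = 0 := by rw [hP, ← haev]; exact hroot
  have hFz0 : F z = 0 := by rw [hF]; simp [hPz]
  have hVopen : IsOpen {w : ℂ | A.eval w ≠ 0} :=
    isOpen_ne.preimage A.continuous
  have hanF : AnalyticAt ℂ F z := by
    apply DifferentiableOn.analyticAt (s := {w : ℂ | A.eval w ≠ 0})
    · exact fun w hw => (hFdiff w hw).differentiableWithinAt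
    · exact hVopen.mem_nhds hAz
  rcases hanF.eventually_constant_or_nhds_le_map_nhds with hconst | hopen
  · -- F locally constant 0 : p would have infinitely many roots
    have hev : ∀ᶠ w in nhds z, P.eval w = 0 := by
      filter_upwards [hconst, hVopen.mem_nhds hAz] with w hw1 hw2
      rw [hFz0] at hw1
      rw [hF] at hw1
      simp only at hw1
      rcases div_eq_zero_iff.mp hw1 with h | h
      · exact h
      · exact absurd h hw2
    obtain ⟨s, hs, hsub⟩ := hev.exists_mem
    have hPzero : P = 0 := by
      apply Polynomial.eq_zero_of_infinite_isRoot
      apply Set.Infinite.mono (s := s)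
      · exact fun w hw => hsub w hw
      · exact infinite_of_mem_nhds z hs
    have : p = 0 := by
      have := Polynomial.map_injective (algebraMap ℝ ℂ)
        (RingHom.injective _)
      exact this (by rw [← hP, hPzero, Polynomial.map_zero])
    exact hp this
  · rw [hFz0] at hopen
    have hVz : {w : ℂ | 0 < w.re} ∈ nhds z :=
      (isOpen_lt continuous_const Complex.continuous_re).mem_nhds hc
    have himg : F '' {w : ℂ | 0 < w.re} ∈ nhds (0:ℂ) :=
      hopen (Filter.image_mem_map hVz)
    obtain ⟨δ, hδ, hball⟩ := Metric.mem_nhds_iff.mp himg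
    have hmem : (((-(δ/2) : ℝ)) : ℂ) ∈ Metric.ball (0:ℂ) δ := by
      rw [Metric.mem_ball, dist_zero_right, Complex.norm_real, Real.norm_eq_abs]
      rw [abs_of_nonpos (by linarith)]
      linarith
    obtain ⟨z₁, hz₁, hFz₁⟩ := hball hmem
    have h1 : 0 ≤ (F z₁).re := claim1 z₁ hz₁
    rw [hFz₁, Complex.ofReal_re] at h1
    linarith

lemma neg_one_par (u v : ℕ) (h : u % 2 = v % 2) : ((-1:ℝ))^u = (-1)^v := by
  rw [← Nat.div_add_mod u 2, ← Nat.div_add_mod v 2, h, pow_add, pow_add, pow_mul, pow_mul]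
  norm_num

lemma Ire_even (m : ℕ) : (Complex.I ^ (2*m)).re = ((-1:ℝ))^m := by
  rw [pow_mul, Complex.I_sq, show ((-1:ℂ)) = ((-1:ℝ):ℂ) by norm_num, ← Complex.ofReal_pow,
    Complex.ofReal_re]

lemma Ire_odd (m : ℕ) : (Complex.I ^ (2*m+1)).re = 0 := by
  rw [pow_succ, pow_mul, Complex.I_sq, show ((-1:ℂ)) = ((-1:ℝ):ℂ) by norm_num,
    ← Complex.ofReal_pow, Complex.re_ofReal_mul, Complex.I_re, mul_zero]

lemma term_re (r s ω : ℝ) (e d : ℕ) :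
    ((r:ℂ) * ((ω:ℂ)*Complex.I)^e * ((s:ℂ) * ((starRingEnd ℂ) ((ω:ℂ)*Complex.I))^d)).re
    = r * s * (-1)^d * ω^(e+d) * (Complex.I^(e+d)).re := by
  have hc : (starRingEnd ℂ) ((ω:ℂ)*Complex.I) = -((ω:ℂ)*Complex.I) := by
    rw [map_mul, Complex.conj_I, Complex.conj_ofReal]; ring
  rw [hc, neg_pow]
  have h2 : (r:ℂ) * ((ω:ℂ)*Complex.I)^e * ((s:ℂ) * ((-1)^d * ((ω:ℂ)*Complex.I)^d))
      = ((r * s * (-1)^d * ω^(e+d) : ℝ):ℂ) * Complex.I^(e+d) := by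
    push_cast
    rw [pow_add, mul_pow, mul_pow, pow_add]
    ring
  rw [h2, Complex.re_ofReal_mul]

lemma hkey (n : ℕ) (hn : 1 ≤ n) (a : ℝ[X]) (had : a.natDegree = n)
    (x : ℤ → ℝ) (hxout : ∀ m : ℤ, m < 0 ∨ (n:ℤ) - 1 < m → x m = 0)
    (cl : ℕ → ℝ)
    (hcl : ∀ l : ℕ, cl l = ∑ j ∈ Finset.range (n + 1),
        (-1 : ℝ) ^ (l + j) * a.coeff (n - j) * x (2 * (l : ℤ) - (j : ℤ) - 1))
    (ω : ℝ) :
    ((Polynomial.aeval ((ω:ℂ)*Complex.I)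
        (∑ e ∈ Finset.range n, C (x ((n:ℤ) - 1 - e)) * X^e)) *
      (starRingEnd ℂ) (Polynomial.aeval ((ω:ℂ)*Complex.I) a)).re
    = ∑ l ∈ Finset.range (n+1), cl l * ω^(2*(n-l)) := by
  set u : ℂ := (ω:ℂ)*Complex.I with hu
  have haP : Polynomial.aeval u (∑ e ∈ Finset.range n, C (x ((n:ℤ) - 1 - e)) * X^e)
      = ∑ e ∈ Finset.range n, (x ((n:ℤ)-1-e) : ℂ) * u^e := by
    rw [map_sum]
    refine Finset.sum_congr rfl fun e _ => ?_
    rw [map_mul, Polynomial.aeval_C, map_pow, Polynomial.aeval_X]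
    norm_num
  have haA : Polynomial.aeval u a = ∑ d ∈ Finset.range (n+1), (a.coeff d : ℂ) * u^d := by
    rw [Polynomial.aeval_eq_sum_range' (n := n+1) (by omega)]
    refine Finset.sum_congr rfl fun d _ => ?_
    rw [Algebra.smul_def]
    norm_num
  rw [haP, haA, map_sum]
  have hconj : ∀ d ∈ Finset.range (n+1),
      (starRingEnd ℂ) ((a.coeff d : ℂ) * u^d)
      = (a.coeff d : ℂ) * ((starRingEnd ℂ) u)^d := by
    intro d _
    rw [map_mul, map_pow, Complex.conj_ofReal]
  rw [Finset.sum_congr rfl hconj, Finset.sum_mul_sum, Complex.re_sum]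
  have hterm : ∀ e ∈ Finset.range n,
      (∑ d ∈ Finset.range (n+1),
        (x ((n:ℤ)-1-e) : ℂ) * u^e * ((a.coeff d : ℂ) * ((starRingEnd ℂ) u)^d)).re
      = ∑ d ∈ Finset.range (n+1),
        x ((n:ℤ)-1-e) * a.coeff d * (-1)^d * ω^(e+d) * (Complex.I^(e+d)).re := by
    intro e _
    rw [Complex.re_sum]
    exact Finset.sum_congr rfl fun d _ => term_re _ _ _ _ _
  rw [Finset.sum_congr rfl hterm]
  -- rewrite RHS
  have hR : ∀ l ∈ Finset.range (n+1), cl l * ω^(2*(n-l))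
      = ∑ d ∈ Finset.range (n+1),
        (-1:ℝ)^(l+(n-d)) * a.coeff d * x (2*(l:ℤ) - ((n-d : ℕ):ℤ) - 1) * ω^(2*(n-l)) := by
    intro l _
    rw [hcl l, Finset.sum_mul, ← Finset.sum_range_reflect]
    refine Finset.sum_congr rfl fun d hd => ?_
    have hdn : d ≤ n := by
      have := Finset.mem_range.mp hd; omega
    rw [show n + 1 - 1 - d = n - d from by omega, show n - (n - d) = d from by omega]
  rw [Finset.sum_congr rfl hR]
  -- convert to product sums
  rw [← Finset.sum_product', ← Finset.sum_product']
  -- drop zero terms on the left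
  conv_lhs => rw [← Finset.sum_filter_of_ne (p := fun q : ℕ × ℕ => (q.1 + q.2) % 2 = 0)
      (fun q _ hq => by
        by_contra hodd
        apply hq
        obtain ⟨m, hm⟩ : ∃ m, q.1 + q.2 = 2*m + 1 := ⟨(q.1+q.2)/2, by omega⟩
        rw [hm, Ire_odd, mul_zero])]
  -- drop zero terms on the right
  conv_rhs => rw [← Finset.sum_filter_of_ne
      (p := fun q : ℕ × ℕ => n + 1 ≤ 2*q.1 + q.2 ∧ 2*q.1 + q.2 ≤ 2*n)
      (fun q hq hne => by
        by_contra hcond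
        apply hne
        have hmem := Finset.mem_product.mp hq
        have hd : q.2 ≤ n := by
          have := Finset.mem_range.mp hmem.2; omega
        have hx0 : x (2*(q.1:ℤ) - ((n - q.2 : ℕ):ℤ) - 1) = 0 := by
          apply hxout
          push_cast [Nat.cast_sub hd]
          omega
        rw [hx0, mul_zero, zero_mul])]
  -- the bijection
  refine Finset.sum_nbij' (fun q => ((2*n - q.1 - q.2)/2, q.2))
    (fun q => (2*n - 2*q.1 - q.2, q.2)) ?_ ?_ ?_ ?_ ?_
  · intro q hq
    have h1 := Finset.mem_filter.mp hq
    have h2 := Finset.mem_product.mp h1.1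
    have he := Finset.mem_range.mp h2.1
    have hd := Finset.mem_range.mp h2.2
    have hpar := h1.2
    simp only [Finset.mem_filter, Finset.mem_product, Finset.mem_range]
    omega
  · intro q hq
    have h1 := Finset.mem_filter.mp hq
    have h2 := Finset.mem_product.mp h1.1
    have hl := Finset.mem_range.mp h2.1
    have hd := Finset.mem_range.mp h2.2
    have hc := h1.2
    simp only [Finset.mem_filter, Finset.mem_product, Finset.mem_range]
    omega
  · intro q hq
    have h1 := Finset.mem_filter.mp hq
    have h2 := Finset.mem_product.mp h1.1
    have he := Finset.mem_range.mp h2.1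
    have hd := Finset.mem_range.mp h2.2
    have hpar := h1.2
    have : (2*n - q.1 - q.2)/2 = (2*n - q.1 - q.2)/2 := rfl
    ext <;> simp only [] <;> omega
  · intro q hq
    have h1 := Finset.mem_filter.mp hq
    have h2 := Finset.mem_product.mp h1.1
    have hl := Finset.mem_range.mp h2.1
    have hd := Finset.mem_range.mp h2.2
    have hc := h1.2
    ext <;> simp only [] <;> omega
  · intro q hq
    have h1 := Finset.mem_filter.mp hq
    have h2 := Finset.mem_product.mp h1.1
    have he := Finset.mem_range.mp h2.1
    have hd := Finset.mem_range.mp h2.2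
    have hpar := h1.2
    obtain ⟨e, d⟩ := q
    simp only at he hd hpar ⊢
    set l := (2*n - e - d)/2 with hl
    have hed : e + d = 2*(n - l) := by omega
    have hxeq : x ((n:ℤ)-1-e) = x (2*(l:ℤ) - ((n - d : ℕ):ℤ) - 1) := by
      congr 1
      have hdn : d ≤ n := by omega
      push_cast [Nat.cast_sub hdn]
      omega
    rw [hed, Ire_even, hxeq]
    have hsign : ((-1:ℝ))^d * (-1)^(n-l) = (-1)^(l+(n-d)) := by
      rw [← pow_add]
      apply neg_one_par
      omega
    calc x (2*(l:ℤ) - ((n - d : ℕ):ℤ) - 1) * a.coeff d * (-1)^d * ω^(2*(n-l)) * (-1)^(n-l)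
        = ((-1:ℝ)^d * (-1)^(n-l)) * a.coeff d * x (2*(l:ℤ) - ((n - d : ℕ):ℤ) - 1)
          * ω^(2*(n-l)) := by ring
      _ = (-1:ℝ)^(l+(n-d)) * a.coeff d * x (2*(l:ℤ) - ((n - d : ℕ):ℤ) - 1) * ω^(2*(n-l)) := by
          rw [hsign]


theorem stmt_7 (n : ℕ) (hn : 3 ≤ n) (a : Polynomial ℝ)
    (haM : a.Monic) (had : a.natDegree = n) (haH : Hurwitz a)
    (k : ℕ) (hk1 : 1 ≤ k) (hk2 : k ≤ n - 2)
    (x : ℤ → ℝ) (hx0 : x 0 = 1)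
    (hxout : ∀ m : ℤ, m < 0 ∨ (n : ℤ) - 1 < m → x m = 0)
    (cl : ℕ → ℝ)
    (hcl : ∀ l : ℕ, cl l = ∑ j ∈ Finset.range (n + 1),
        (-1 : ℝ) ^ (l + j) * a.coeff (n - j) * x (2 * (l : ℤ) - (j : ℤ) - 1))
    (hell : (cl (k + 1)) ^ 2 - 4 * cl k * cl (k + 2) < 0)
    (hzero : ∀ l : ℕ, 1 ≤ l → l ≤ n → l ≠ k → l ≠ k + 1 → l ≠ k + 2 → cl l = 0) :
    ∀ i : ℕ, 1 ≤ i → i ≤ n - 1 → 0 ≤ x (i : ℤ) := by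
  have hkn : k + 2 ≤ n := by omega
  -- the polynomial p
  set p : ℝ[X] := ∑ e ∈ Finset.range n, C (x ((n:ℤ) - 1 - e)) * X^e with hp
  have hpcoeff : ∀ e, e < n → p.coeff e = x ((n:ℤ) - 1 - e) := by
    intro e he
    rw [hp, Polynomial.finset_sum_coeff]
    rw [Finset.sum_eq_single_of_mem e (Finset.mem_range.mpr he)]
    · rw [Polynomial.coeff_C_mul, Polynomial.coeff_X_pow, if_pos rfl, mul_one]
    · intro b _ hb
      rw [Polynomial.coeff_C_mul, Polynomial.coeff_X_pow, if_neg (Ne.symm hb), mul_zero]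
  have hptop : p.coeff (n - 1) = 1 := by
    rw [hpcoeff (n-1) (by omega)]
    rw [show (n:ℤ) - 1 - ((n-1 : ℕ):ℤ) = 0 from by push_cast [Nat.cast_sub (by omega : 1 ≤ n)]; ring]
    exact hx0
  have hpd : p.natDegree = n - 1 := by
    apply le_antisymm
    · rw [hp]
      apply Polynomial.natDegree_sum_le_of_forall_le
      intro e he
      exact le_trans (Polynomial.natDegree_C_mul_X_pow_le _ _)
        (by have := Finset.mem_range.mp he; omega)
    · exact Polynomial.le_natDegree_of_ne_zero (by rw [hptop]; exact one_ne_zero)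
  have hpM : p.Monic := by
    rw [Polynomial.Monic, Polynomial.leadingCoeff, hpd, hptop]
  have hplt : p.natDegree < a.natDegree := by rw [hpd, had]; omega
  -- sign of cl k
  have hckprod : 0 < cl k * cl (k + 2) := by nlinarith [sq_nonneg (cl (k+1))]
  have hck : cl k ≠ 0 := by
    intro h; rw [h, zero_mul] at hckprod; exact lt_irrefl _ hckprod
  set s : ℝ := if 0 < cl k then 1 else -1 with hs
  have hs0 : s ≠ 0 := by
    rw [hs]; split <;> norm_num
  -- positivity of the quadratic factor
  have hquad : ∀ ω : ℝ, 0 ≤ s * (cl k * ω^4 + cl (k+1) * ω^2 + cl (k+2)) := by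
    intro ω
    rcases lt_or_ge 0 (cl k) with hpos | hneg
    · rw [hs, if_pos hpos, one_mul]
      nlinarith [sq_nonneg (2 * cl k * ω^2 + cl (k+1)), hell, hpos]
    · have hneg' : cl k < 0 := lt_of_le_of_ne hneg hck
      rw [hs, if_neg (not_lt.mpr hneg)]
      nlinarith [sq_nonneg (2 * cl k * ω^2 + cl (k+1)), hell, hneg']
  -- the three-term reduction of the sum
  have hsum3 : ∀ ω : ℝ, ∑ l ∈ Finset.range (n+1), cl l * ω^(2*(n-l))
      = cl k * ω^(2*(n-k)) + cl (k+1) * ω^(2*(n-(k+1))) + cl (k+2) * ω^(2*(n-(k+2))) := by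
    intro ω
    have hc0 : cl 0 = 0 := by
      rw [hcl 0]
      apply Finset.sum_eq_zero
      intro j _
      rw [hxout (2 * ((0:ℕ):ℤ) - (j:ℤ) - 1) (Or.inl (by push_cast; omega)), mul_zero]
    have hsub : ({k, k+1, k+2} : Finset ℕ) ⊆ Finset.range (n+1) := by
      intro m hm
      simp only [Finset.mem_insert, Finset.mem_singleton] at hm
      rw [Finset.mem_range]
      omega
    rw [← Finset.sum_subset hsub]
    · rw [Finset.sum_insert (by simp), Finset.sum_insert (by simp),
        Finset.sum_singleton]
      ring
    · intro l hl hnot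
      simp only [Finset.mem_insert, Finset.mem_singleton] at hnot
      push_neg at hnot
      rcases Nat.eq_zero_or_pos l with h0 | h1
      · rw [h0, hc0, zero_mul]
      · rw [hzero l h1 (by have := Finset.mem_range.mp hl; omega) hnot.1 hnot.2.1 hnot.2.2,
          zero_mul]
  -- positivity on the imaginary axis for C s * p
  have hpos : ∀ ω : ℝ, 0 ≤ (Polynomial.aeval ((ω:ℂ) * Complex.I) (C s * p) *
      (starRingEnd ℂ) (Polynomial.aeval ((ω:ℂ) * Complex.I) a)).re := by
    intro ω
    rw [map_mul, Polynomial.aeval_C]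
    have halg : (algebraMap ℝ ℂ) s = (s : ℂ) := rfl
    rw [halg, mul_assoc, Complex.re_ofReal_mul]
    rw [hp, hkey n (by omega) a had x hxout cl hcl ω, hsum3 ω]
    have he1 : 2*(n-k) = (n-k-2)*2 + 4 := by omega
    have he2 : 2*(n-(k+1)) = (n-k-2)*2 + 2 := by omega
    have he3 : 2*(n-(k+2)) = (n-k-2)*2 := by omega
    rw [he1, he2, he3, pow_add, pow_add, pow_mul]
    have hfact : s * (cl k * ((ω^(n-k-2))^2 * ω^4) + cl (k+1) * ((ω^(n-k-2))^2 * ω^2)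
        + cl (k+2) * (ω^(n-k-2))^2)
        = (ω^(n-k-2))^2 * (s * (cl k * ω^4 + cl (k+1) * ω^2 + cl (k+2))) := by ring
    rw [hfact]
    exact mul_nonneg (sq_nonneg _) (hquad ω)
  -- apply the analytic lemma
  have hroots : ∀ z : ℂ, Polynomial.aeval z p = 0 → z.re ≤ 0 := by
    have han' : 0 < a.natDegree := by rw [had]; omega
    have hd' : (C s * p).natDegree < a.natDegree := by
      rw [Polynomial.natDegree_C_mul hs0]; exact hplt
    have hne' : (C s * p) ≠ 0 := mul_ne_zero (by
      simpa using hs0) hpM.ne_zero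
    have hB := lemB a (C s * p) haM han' haH hd' hne' hpos
    intro z hz
    apply hB z
    rw [map_mul, hz, mul_zero]
  -- all coefficients of p are nonnegative
  have hcoeffs := lemA (n-1) p hpM hpd hroots
  -- conclude
  intro i hi1 hi2
  have := hcoeffs (n - 1 - i)
  rw [hpcoeff (n-1-i) (by omega)] at this
  rwa [show (n:ℤ) - 1 - ((n-1-i : ℕ):ℤ) = (i:ℕ) from by
    push_cast [Nat.cast_sub (by omega : i ≤ n - 1), Nat.cast_sub (by omega : 1 ≤ n)]
    ring] at this
end

section
/- Let a, b be monic degree-n real Hurwitz polynomials and suppose c is a real polynomial of degree n such that c/a and c/b are strictly positive real. Then c is Hurwitz stable. -/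
open Polynomial Filter Topology Complex

-- multiset product lower bound
lemma ms_pow_le_prod {α : Type*} (s : Multiset α) (f : α → ℝ) (x : ℝ) (hx : 0 ≤ x)
    (h : ∀ r ∈ s, x ≤ f r) : x ^ Multiset.card s ≤ (s.map f).prod := by
  induction s using Multiset.induction with
  | empty => simp
  | cons a s ih =>
    simp only [Multiset.map_cons, Multiset.prod_cons, Multiset.card_cons, pow_succ']
    have ha : x ≤ f a := h a (Multiset.mem_cons_self a s)
    have ihs : x ^ Multiset.card s ≤ (s.map f).prod :=
      ih (fun r hr => h r (Multiset.mem_cons_of_mem hr))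
    exact mul_le_mul ha ihs (pow_nonneg hx _) (hx.trans ha)

-- multiset product monotone
lemma ms_prod_le_prod {α : Type*} (s : Multiset α) (f g : α → ℝ)
    (hf : ∀ r ∈ s, 0 ≤ f r) (h : ∀ r ∈ s, f r ≤ g r) :
    (s.map f).prod ≤ (s.map g).prod := by
  induction s using Multiset.induction with
  | empty => simp
  | cons a s ih =>
    simp only [Multiset.map_cons, Multiset.prod_cons]
    have hfa := hf a (Multiset.mem_cons_self a s)
    have hga := h a (Multiset.mem_cons_self a s)
    have hfp : (0:ℝ) ≤ (s.map f).prod := by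
      apply Multiset.prod_nonneg
      intro x hx
      obtain ⟨r, hr, rfl⟩ := Multiset.mem_map.mp hx
      exact hf r (Multiset.mem_cons_of_mem hr)
    exact mul_le_mul hga (ih (fun r hr => hf r (Multiset.mem_cons_of_mem hr))
      (fun r hr => h r (Multiset.mem_cons_of_mem hr))) hfp (hfa.trans hga)

lemma ms_prod_pos {α : Type*} (s : Multiset α) (f : α → ℝ)
    (h : ∀ r ∈ s, 0 < f r) : 0 < (s.map f).prod := by
  induction s using Multiset.induction with
  | empty => simp
  | cons a s ih =>
    simp only [Multiset.map_cons, Multiset.prod_cons]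
    exact mul_pos (h a (Multiset.mem_cons_self a s))
      (ih (fun r hr => h r (Multiset.mem_cons_of_mem hr)))


lemma ms_norm_prod (s : Multiset ℂ) : ‖s.prod‖ = (s.map (fun z => ‖z‖)).prod := by
  induction s using Multiset.induction with
  | empty => simp
  | cons a s ih => simp [norm_mul, ih]

lemma norm_eval_eq (Q : Polynomial ℂ) (z : ℂ) :
    ‖Q.eval z‖ = ‖Q.leadingCoeff‖ * (Q.roots.map (fun r => ‖z - r‖)).prod := by
  conv_lhs => rw [← C_leadingCoeff_mul_prod_multiset_X_sub_C (splits_iff_card_roots.mp (IsAlgClosed.splits Q))]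
  rw [eval_mul, eval_C, norm_mul, eval_multiset_prod, Multiset.map_map, ms_norm_prod,
    Multiset.map_map]
  simp [Function.comp]


lemma eval_ge_re_pow (q : Polynomial ℝ) (hq : Hurwitz q) (hl : 0 ≤ q.leadingCoeff)
    (z : ℂ) (hz : 0 ≤ z.re) :
    q.leadingCoeff * z.re ^ q.natDegree ≤ ‖(q.map (algebraMap ℝ ℂ)).eval z‖ := by
  by_cases hq0 : q = 0
  · simp [hq0]
  set Q := q.map (algebraMap ℝ ℂ) with hQ
  have hQ0 : Q ≠ 0 := by
    simpa [hQ] using (Polynomial.map_ne_zero_iff (algebraMap ℝ ℂ).injective).mpr hq0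
  have hcard : Multiset.card Q.roots = q.natDegree := by
    rw [splits_iff_card_roots.mp (IsAlgClosed.splits Q)]
    exact q.natDegree_map (algebraMap ℝ ℂ)
  have hlc : ‖Q.leadingCoeff‖ = q.leadingCoeff := by
    rw [hQ, leadingCoeff_map_of_injective (algebraMap ℝ ℂ).injective]
    simpa using _root_.abs_of_nonneg hl
  rw [norm_eval_eq, hlc]
  apply mul_le_mul_of_nonneg_left _ hl
  calc z.re ^ q.natDegree = z.re ^ Multiset.card Q.roots := by rw [hcard]
    _ ≤ (Q.roots.map (fun r => ‖z - r‖)).prod := by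
        apply ms_pow_le_prod _ _ _ hz
        intro r hr
        have hroot : Q.IsRoot r := (Polynomial.mem_roots hQ0).mp hr
        have hre : r.re < 0 := hq r hroot
        have h2 : z.re - r.re ≤ ‖z - r‖ := by
          have h3 := Complex.re_le_norm (z - r)
          simpa using h3
        linarith


lemma root_factor_lb (r z : ℂ) (hr : r.re < 0) (hz : 0 ≤ z.re) :
    min (-r.re) 1 / (2 + 2 * ‖r‖) * (1 + ‖z‖) ≤ ‖z - r‖ := by
  have hrn : (0:ℝ) ≤ ‖r‖ := norm_nonneg r
  have hzn : (0:ℝ) ≤ ‖z‖ := norm_nonneg z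
  have hden : (0:ℝ) < 2 + 2 * ‖r‖ := by linarith
  have hmin : 0 < min (-r.re) 1 := lt_min (by linarith) one_pos
  by_cases hcase : ‖z‖ ≤ 1 + 2 * ‖r‖
  · have h1 : min (-r.re) 1 / (2 + 2 * ‖r‖) * (1 + ‖z‖) ≤ min (-r.re) 1 := by
      rw [div_mul_eq_mul_div, div_le_iff₀ hden]
      have : min (-r.re) 1 * (1 + ‖z‖) ≤ min (-r.re) 1 * (2 + 2 * ‖r‖) := by
        apply mul_le_mul_of_nonneg_left (by linarith) hmin.le
      linarith
    have h2 : z.re - r.re ≤ ‖z - r‖ := by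
      have h3 := Complex.re_le_norm (z - r)
      simpa using h3
    have : min (-r.re) 1 ≤ -r.re := min_le_left _ _
    linarith
  · push_neg at hcase
    have ha : min (-r.re) 1 / (2 + 2 * ‖r‖) ≤ 1 / 2 := by
      rw [div_le_div_iff₀ hden two_pos]
      nlinarith [min_le_right (-r.re) 1]
    have h1 : min (-r.re) 1 / (2 + 2 * ‖r‖) * (1 + ‖z‖) ≤ 1 / 2 * (1 + ‖z‖) :=
      mul_le_mul_of_nonneg_right ha (by linarith)
    have h2 : ‖z‖ - ‖r‖ ≤ ‖z - r‖ := norm_sub_norm_le z r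
    linarith

lemma eval_lb (q : Polynomial ℝ) (hq : Hurwitz q) (hl : 0 < q.leadingCoeff) :
    ∃ ε > 0, ∀ z : ℂ, 0 ≤ z.re →
      ε * (1 + ‖z‖) ^ q.natDegree ≤ ‖(q.map (algebraMap ℝ ℂ)).eval z‖ := by
  set Q := q.map (algebraMap ℝ ℂ) with hQ
  have hq0 : q ≠ 0 := fun h => by simp [h, leadingCoeff_zero] at hl
  have hQ0 : Q ≠ 0 := by
    simpa [hQ] using (Polynomial.map_ne_zero_iff (algebraMap ℝ ℂ).injective).mpr hq0
  have hcard : Multiset.card Q.roots = q.natDegree := by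
    rw [splits_iff_card_roots.mp (IsAlgClosed.splits Q)]
    exact q.natDegree_map (algebraMap ℝ ℂ)
  have hlc : ‖Q.leadingCoeff‖ = q.leadingCoeff := by
    rw [hQ, leadingCoeff_map_of_injective (algebraMap ℝ ℂ).injective]
    simpa using _root_.abs_of_nonneg hl.le
  have hroots : ∀ r ∈ Q.roots, r.re < 0 := fun r hr =>
    hq r ((Polynomial.mem_roots hQ0).mp hr)
  refine ⟨q.leadingCoeff * (Q.roots.map (fun r => min (-r.re) 1 / (2 + 2 * ‖r‖))).prod,
    mul_pos hl (ms_prod_pos _ _ (fun r hr => by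
      have := hroots r hr
      have : 0 < min (-r.re) 1 := lt_min (by linarith) one_pos
      positivity)), ?_⟩
  intro z hz
  rw [norm_eval_eq, hlc, mul_assoc]
  apply mul_le_mul_of_nonneg_left _ hl.le
  rw [← hcard, ← Multiset.prod_replicate, ← Multiset.map_const', ← Multiset.prod_map_mul]
  apply ms_prod_le_prod
  · intro r hr
    have h1 := hroots r hr
    have h2 : 0 < min (-r.re) 1 := lt_min (by linarith) one_pos
    have : (0:ℝ) ≤ ‖r‖ := norm_nonneg r
    have : (0:ℝ) ≤ ‖z‖ := norm_nonneg z
    positivity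
  · intro r hr
    exact root_factor_lb r z (hroots r hr) hz


lemma eval_ub (d : Polynomial ℝ) (n : ℕ) (hd : d.natDegree ≤ n) :
    ∃ M ≥ (0:ℝ), ∀ z : ℂ, ‖(d.map (algebraMap ℝ ℂ)).eval z‖ ≤ M * (1 + ‖z‖) ^ n := by
  set D := d.map (algebraMap ℝ ℂ) with hD
  refine ⟨∑ k ∈ Finset.range (n+1), |d.coeff k|, Finset.sum_nonneg (fun k _ => abs_nonneg _), ?_⟩
  intro z
  have hDd : D.natDegree < n + 1 := by
    have h0 : D.natDegree ≤ d.natDegree := natDegree_map_le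
    omega
  rw [eval_eq_sum_range' hDd z, Finset.sum_mul]
  refine (norm_sum_le _ _).trans (Finset.sum_le_sum fun k hk => ?_)
  rw [norm_mul, norm_pow, hD, coeff_map]
  have h1 : ‖(algebraMap ℝ ℂ) (d.coeff k)‖ = |d.coeff k| := by
    simp
  rw [h1]
  apply mul_le_mul_of_nonneg_left _ (abs_nonneg _)
  calc ‖z‖ ^ k ≤ (1 + ‖z‖) ^ k := pow_le_pow_left₀ (norm_nonneg z) (by linarith [norm_nonneg z]) k
    _ ≤ (1 + ‖z‖) ^ n := pow_le_pow_right₀ (by linarith [norm_nonneg z]) (by have := Finset.mem_range.mp hk; omega)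


lemma term_tendsto (cst : ℂ) (k n : ℕ) (hk : k < n) :
    Tendsto (fun ω : ℝ => cst * ((ω:ℂ) * I)^k / ((ω:ℂ) * I)^n) atTop (𝓝 0) := by
  have hg : Tendsto (fun ω : ℝ => ‖cst‖ * ω⁻¹) atTop (𝓝 0) := by
    simpa using tendsto_inv_atTop_zero.const_mul ‖cst‖
  apply squeeze_zero_norm' _ hg
  filter_upwards [eventually_ge_atTop (1:ℝ)] with ω hω
  have hω0 : 0 < ω := lt_of_lt_of_le one_pos hω
  have hnz : ‖(ω:ℂ) * I‖ = ω := by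
    simp [norm_mul, Complex.norm_real, abs_of_pos hω0]
  rw [norm_div, norm_mul, norm_pow, norm_pow, hnz]
  rw [div_le_iff₀ (by positivity)]
  have hpow : ω ^ k * ω ≤ ω ^ n := by
    calc ω ^ k * ω = ω ^ (k+1) := by ring
      _ ≤ ω ^ n := pow_le_pow_right₀ hω (by omega)
  calc ‖cst‖ * ω ^ k = ‖cst‖ * ω⁻¹ * (ω ^ k * ω) := by field_simp
    _ ≤ ‖cst‖ * ω⁻¹ * ω ^ n := by
        apply mul_le_mul_of_nonneg_left hpow (by positivity)

lemma tendsto_eval_div (P : Polynomial ℂ) (n : ℕ) (hP : P.natDegree ≤ n) :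
    Tendsto (fun ω : ℝ => P.eval ((ω:ℂ) * I) / ((ω:ℂ) * I)^n) atTop (𝓝 (P.coeff n)) := by
  have heval : ∀ ω : ℝ, P.eval ((ω:ℂ) * I) / ((ω:ℂ) * I)^n
      = ∑ k ∈ Finset.range (n+1), P.coeff k * ((ω:ℂ) * I)^k / ((ω:ℂ) * I)^n := by
    intro ω
    rw [eval_eq_sum_range' (show P.natDegree < n + 1 by omega) _, Finset.sum_div]
  rw [show (𝓝 (P.coeff n)) = 𝓝 (∑ k ∈ Finset.range (n+1),
      if k = n then P.coeff n else 0) from by rw [Finset.sum_ite_eq' _ _ _]; simp]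
  apply Tendsto.congr (fun ω => (heval ω).symm)
  apply tendsto_finset_sum
  intro k hk
  by_cases hkn : k = n
  · subst hkn
    simp only [if_pos rfl, ↓reduceIte]
    apply Tendsto.congr' _ (tendsto_const_nhds)
    filter_upwards [eventually_ge_atTop (1:ℝ)] with ω hω
    have hω0 : ω ≠ 0 := by linarith
    have hz : ((ω:ℂ) * I) ^ k ≠ 0 := by
      apply pow_ne_zero
      simp [Complex.ofReal_ne_zero, hω0, Complex.I_ne_zero]
    field_simp
  · simp only [if_neg hkn]
    exact term_tendsto _ _ _ (by have := Finset.mem_range.mp hk; omega)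


lemma clamp_lip (s t : ℝ) : |max 0 (min 1 s) - max 0 (min 1 t)| ≤ |s - t| := by
  simp only [max_def, min_def]
  split_ifs <;>
    (rw [abs_le]; constructor <;> nlinarith [le_abs_self (s - t), neg_abs_le (s - t)])

lemma clamp_mem (t : ℝ) : 0 ≤ max 0 (min 1 t) ∧ max 0 (min 1 t) ≤ 1 :=
  ⟨le_max_left _ _, max_le (by norm_num) (min_le_left _ _)⟩

lemma evalI_eq (p : Polynomial ℝ) (ω : ℝ) :
    evalI p ω = (p.map (algebraMap ℝ ℂ)).eval ((ω:ℂ) * I) := by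
  rw [evalI, aeval_def, eval₂_eq_eval_map]

lemma evalI_comb (a c : Polynomial ℝ) (α β ω : ℝ) :
    evalI (C α * a + C β * c) ω = (α:ℂ) * evalI a ω + (β:ℂ) * evalI c ω := by
  simp [evalI, map_add, map_mul, aeval_C, Complex.coe_algebraMap]

lemma evalI_a_ne (a : Polynomial ℝ) (haH : Hurwitz a) (ω : ℝ) : evalI a ω ≠ 0 := by
  intro h
  have : ((ω:ℂ) * I).re < 0 := haH _ (by rwa [IsRoot, ← evalI_eq])
  simp at this

lemma comb_ne (a c : Polynomial ℝ) (haH : Hurwitz a)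
    (hpos : ∀ ω : ℝ, 0 < (evalI c ω / evalI a ω).re)
    (α β : ℝ) (hα : 0 ≤ α) (hβ : 0 ≤ β) (hs : α + β = 1) (ω : ℝ) :
    evalI (C α * a + C β * c) ω ≠ 0 := by
  rw [evalI_comb]
  intro h
  have hA := evalI_a_ne a haH ω
  rcases eq_or_lt_of_le hβ with hβ0 | hβ0
  · have hα1 : α = 1 := by linarith
    rw [← hβ0, hα1] at h
    simp at h
    exact hA h
  · have hc : evalI c ω = ((-(α/β) : ℝ) : ℂ) * evalI a ω := by
      have hβc : (β:ℂ) ≠ 0 := by exact_mod_cast hβ0.ne'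
      push_cast
      field_simp
      linear_combination h
    have := hpos ω
    rw [hc, mul_div_assoc, div_self hA, mul_one, Complex.ofReal_re] at this
    have : (0:ℝ) < -(α/β) := this
    have h2 : 0 ≤ α / β := div_nonneg hα hβ0.le
    linarith


lemma lc_pos (n : ℕ) (a c : Polynomial ℝ) (haM : a.Monic) (hna : a.natDegree = n)
    (haH : Hurwitz a) (hcd : c.natDegree = n) (hc0 : c ≠ 0)
    (hpos : ∀ ω : ℝ, 0 < (evalI c ω / evalI a ω).re) : 0 < c.leadingCoeff := by
  have h1 := tendsto_eval_div (c.map (algebraMap ℝ ℂ)) n (le_trans natDegree_map_le hcd.le)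
  have h2 := tendsto_eval_div (a.map (algebraMap ℝ ℂ)) n (le_trans natDegree_map_le hna.le)
  rw [coeff_map, show c.coeff n = c.leadingCoeff by rw [leadingCoeff, hcd]] at h1
  rw [coeff_map, show a.coeff n = 1 by rw [← hna]; exact haM.coeff_natDegree, map_one] at h2
  have hrat : Tendsto (fun ω : ℝ => evalI c ω / evalI a ω) atTop
      (𝓝 ((algebraMap ℝ ℂ) c.leadingCoeff / 1)) := by
    apply Tendsto.congr' _ (h1.div h2 one_ne_zero)
    filter_upwards [eventually_ge_atTop (1:ℝ)] with ω hω
    have hω0 : (ω:ℂ) * I ≠ 0 := by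
      simp [Complex.ofReal_ne_zero, Complex.I_ne_zero]
      intro h; rw [h] at hω; norm_num at hω
    have hzn : ((ω:ℂ) * I) ^ n ≠ 0 := pow_ne_zero _ hω0
    rw [Pi.div_apply, evalI_eq, evalI_eq]
    have hy : (a.map (algebraMap ℝ ℂ)).eval ((ω:ℂ)*I) ≠ 0 :=
      fun h => evalI_a_ne a haH ω ((evalI_eq a ω).trans h)
    field_simp
  have hre : Tendsto (fun ω : ℝ => (evalI c ω / evalI a ω).re) atTop (𝓝 c.leadingCoeff) := by
    have := (Complex.continuous_re.tendsto _).comp hrat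
    simpa [Function.comp_def] using this
  have hge : 0 ≤ c.leadingCoeff := ge_of_tendsto hre (Eventually.of_forall fun ω => (hpos ω).le)
  exact lt_of_le_of_ne hge (Ne.symm (leadingCoeff_ne_zero.mpr hc0))


theorem stmt_19 (n : ℕ) (a b c : Polynomial ℝ)
    (haM : a.Monic) (hbM : b.Monic)
    (hna : a.natDegree = n) (hnb : b.natDegree = n)
    (haH : Hurwitz a) (hbH : Hurwitz b)
    (hcd : c.natDegree = n)
    (hca : SPR c a) (hcb : SPR c b) :
    Hurwitz c := by
  obtain ⟨hdeg, -, hpos⟩ := hca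
  have hc0 : c ≠ 0 := by
    intro h
    have := hpos 0
    rw [h] at this
    simp [evalI] at this
  have hlc : 0 < c.leadingCoeff := lc_pos n a c haM hna haH hcd hc0 hpos
  set m : ℝ := min 1 c.leadingCoeff with hm
  have hmpos : 0 < m := lt_min one_pos hlc
  set τ : ℝ → ℝ := fun t => max 0 (min 1 t) with hτ
  set p : ℝ → Polynomial ℝ := fun t => C (1 - τ t) * a + C (τ t) * c with hp
  have hτ0 : ∀ t, 0 ≤ τ t := fun t => (clamp_mem t).1
  have hτ1 : ∀ t, τ t ≤ 1 := fun t => (clamp_mem t).2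
  have hτlip : ∀ s t, |τ s - τ t| ≤ |s - t| := clamp_lip
  have hcoeffn : ∀ t, (p t).coeff n = (1 - τ t) + τ t * c.leadingCoeff := by
    intro t
    simp only [hp, coeff_add, coeff_C_mul]
    rw [show a.coeff n = 1 by rw [← hna]; exact haM.coeff_natDegree,
      show c.coeff n = c.leadingCoeff by rw [leadingCoeff, hcd]]
    ring
  have hmle : ∀ t, m ≤ (p t).coeff n := by
    intro t
    rw [hcoeffn t]
    have h1 := hτ0 t; have h2 := hτ1 t
    have h3 : m ≤ 1 := min_le_left _ _
    have h4 : m ≤ c.leadingCoeff := min_le_right _ _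
    nlinarith
  have hcne : ∀ t, (p t).coeff n ≠ 0 := fun t => (lt_of_lt_of_le hmpos (hmle t)).ne'
  have hdegp : ∀ t, (p t).natDegree = n := by
    intro t
    apply le_antisymm
    · apply le_trans (natDegree_add_le _ _)
      exact max_le (le_trans (natDegree_C_mul_le _ _) hna.le)
        (le_trans (natDegree_C_mul_le _ _) hcd.le)
    · exact le_natDegree_of_ne_zero (hcne t)
  have hleadm : ∀ t, m ≤ (p t).leadingCoeff := by
    intro t
    rw [leadingCoeff, hdegp t]
    exact hmle t
  have hkey : ∀ s u : ℝ, p s - p u = C (τ s - τ u) * (c - a) := by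
    intro s u
    simp only [hp, C_sub, C_1]
    ring
  have hkeyeval : ∀ (s u : ℝ) (z : ℂ),
      ((p s).map (algebraMap ℝ ℂ)).eval z - ((p u).map (algebraMap ℝ ℂ)).eval z
        = ((τ s - τ u : ℝ) : ℂ) * (((c - a).map (algebraMap ℝ ℂ)).eval z) := by
    intro s u z
    rw [← eval_sub, ← Polynomial.map_sub, hkey s u, Polynomial.map_mul, map_C, eval_mul, eval_C]
    norm_num
  have himag : ∀ (t : ℝ) (z : ℂ), ((p t).map (algebraMap ℝ ℂ)).IsRoot z → z.re ≠ 0 := by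
    intro t z hroot hre
    have hz : z = ((z.im : ℝ) : ℂ) * I := by
      apply Complex.ext <;> simp [hre]
    apply comb_ne a c haH hpos (1 - τ t) (τ t) (by linarith [hτ1 t]) (hτ0 t) (by ring) z.im
    rw [show (C (1 - τ t) * a + C (τ t) * c) = p t from rfl, evalI_eq, ← hz]
    exact hroot
  set U : Set ℝ := {t | Hurwitz (p t)} with hU
  have hopen : IsOpen U := by
    rw [Metric.isOpen_iff]
    intro t ht
    obtain ⟨ε, hε, hlb⟩ := eval_lb (p t) ht (lt_of_lt_of_le hmpos (hleadm t))
    obtain ⟨M, hM, hub⟩ := eval_ub (c - a) n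
      (le_trans (natDegree_sub_le c a) (by rw [hcd, hna]; simp))
    refine ⟨ε / (M + 1), by positivity, ?_⟩
    intro t' ht'
    rw [Metric.mem_ball, Real.dist_eq] at ht'
    show Hurwitz (p t')
    intro z hroot
    by_contra hzre
    push_neg at hzre
    have hLB := hlb z hzre
    rw [hdegp t] at hLB
    have heval := hkeyeval t t' z
    have hr0 : ((p t').map (algebraMap ℝ ℂ)).eval z = 0 := hroot
    rw [hr0, sub_zero] at heval
    have hnorm : ‖((p t).map (algebraMap ℝ ℂ)).eval z‖
        = |τ t - τ t'| * ‖((c - a).map (algebraMap ℝ ℂ)).eval z‖ := by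
      rw [heval, norm_mul, Complex.norm_real, Real.norm_eq_abs]
    have hchain : ‖((p t).map (algebraMap ℝ ℂ)).eval z‖
        ≤ |t - t'| * (M * (1 + ‖z‖) ^ n) := by
      rw [hnorm]
      exact mul_le_mul (hτlip t t') (hub z) (norm_nonneg _) (abs_nonneg _)
    have h6 : |t - t'| < ε / (M + 1) := by rwa [abs_sub_comm]
    have h7 : (0:ℝ) < (1 + ‖z‖) ^ n := by positivity
    have h10 : |t - t'| * M < ε := by
      have h11 : |t - t'| * (M + 1) < ε := by
        have := (lt_div_iff₀ (by positivity : (0:ℝ) < M + 1)).mp h6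
        linarith
      nlinarith [abs_nonneg (t - t')]
    have hlt : |t - t'| * (M * (1 + ‖z‖) ^ n) < ε * (1 + ‖z‖) ^ n := by
      calc |t - t'| * (M * (1 + ‖z‖) ^ n) = (|t - t'| * M) * (1 + ‖z‖) ^ n := by ring
        _ < ε * (1 + ‖z‖) ^ n := by exact mul_lt_mul_of_pos_right h10 h7
    linarith
  have hclosed : IsClosed U := by
    rw [← isOpen_compl_iff, Metric.isOpen_iff]
    intro t ht
    have ht2 : ¬ ∀ z : ℂ, ((p t).map (algebraMap ℝ ℂ)).IsRoot z → z.re < 0 := ht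
    push_neg at ht2
    obtain ⟨z, hroot, hre⟩ := ht2
    have hrepos : 0 < z.re := lt_of_le_of_ne hre (Ne.symm (himag t z hroot))
    set K := ‖((c - a).map (algebraMap ℝ ℂ)).eval z‖ with hK
    have hK0 : 0 ≤ K := norm_nonneg _
    refine ⟨m * z.re ^ n / (K + 1), by positivity, ?_⟩
    intro t' ht'
    rw [Metric.mem_ball, Real.dist_eq] at ht'
    simp only [Set.mem_compl_iff, hU, Set.mem_setOf_eq]
    intro ht'U
    have hLB := eval_ge_re_pow (p t') ht'U (le_trans hmpos.le (hleadm t')) z hre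
    rw [hdegp t'] at hLB
    have hLB2 : m * z.re ^ n ≤ ‖((p t').map (algebraMap ℝ ℂ)).eval z‖ :=
      le_trans (mul_le_mul_of_nonneg_right (hleadm t') (pow_nonneg hre n)) hLB
    have heval := hkeyeval t' t z
    have hr0 : ((p t).map (algebraMap ℝ ℂ)).eval z = 0 := hroot
    rw [hr0, sub_zero] at heval
    have hnorm : ‖((p t').map (algebraMap ℝ ℂ)).eval z‖ = |τ t' - τ t| * K := by
      rw [heval, norm_mul, Complex.norm_real, Real.norm_eq_abs]
    have h8 : |τ t' - τ t| ≤ |t' - t| := hτlip t' t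
    have h10 : |t' - t| * (K + 1) < m * z.re ^ n := by
      have := (lt_div_iff₀ (by positivity : (0:ℝ) < K + 1)).mp ht'
      linarith
    nlinarith [abs_nonneg (t' - t)]
  have h0mem : (0:ℝ) ∈ U := by
    have hp0 : p 0 = a := by simp [hp, hτ]
    show Hurwitz (p 0)
    rw [hp0]
    exact haH
  have huniv : U = Set.univ := IsClopen.eq_univ ⟨hclosed, hopen⟩ ⟨0, h0mem⟩
  have h1mem : (1:ℝ) ∈ U := by rw [huniv]; trivial
  have hp1 : p 1 = c := by simp [hp, hτ]
  have hfin : Hurwitz (p 1) := h1mem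
  rwa [hp1] at hfin
end
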